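/- At each endpoint of an Arnold tongue the periodic orbit is parabolic: let p/q be rational (p ∈ ℤ, q ≥ 1) and let θ* be either the infimum or the supremum of the set {θ ∈ ℝ : ρ(θ) = p/q} (assumed nonempty). Then there exists x ∈ ℝ such that A_{θ*}^{∘q}(x) = x + p and the derivative of A_{θ*}^{∘q} at x equals 1 (the orbit has eigenvalue one). -/

import Mathlib

noncomputable def arnoldR (θ : ℝ) (x : ℝ) : ℝ :=
  x + θ + Real.sin (2 * Real.pi * x) / (2 * Real.pi)

open Real Filter Set

lemma arnold_two_pi_pos : (0:ℝ) < 2 * π := by positivity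

lemma arnold_sin_lip (a b : ℝ) : |Real.sin a - Real.sin b| ≤ |a - b| := by
  rw [Real.sin_sub_sin]
  have h1 : |Real.sin ((a-b)/2)| ≤ |(a-b)/2| := Real.abs_sin_le_abs
  have h2 : |Real.cos ((a+b)/2)| ≤ 1 := Real.abs_cos_le_one _
  calc |2 * Real.sin ((a-b)/2) * Real.cos ((a+b)/2)|
      = 2 * |Real.sin ((a-b)/2)| * |Real.cos ((a+b)/2)| := by
        rw [abs_mul, abs_mul, abs_two]
    _ ≤ 2 * |(a-b)/2| * 1 := by
        apply mul_le_mul ?_ h2 (abs_nonneg _) (by positivity)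
        exact mul_le_mul_of_nonneg_left h1 (by norm_num)
    _ = |a - b| := by rw [mul_one, abs_div, abs_two]; ring

lemma arnoldR_sin_bound (x y : ℝ) (h : x ≤ y) :
    |Real.sin (2*π*y) - Real.sin (2*π*x)| ≤ 2*π*(y - x) := by
  have := arnold_sin_lip (2*π*y) (2*π*x)
  have h2 : |2*π*y - 2*π*x| = 2*π*(y-x) := by
    rw [abs_of_nonneg (by nlinarith [pi_pos])]; ring
  rw [h2] at this; exact this

lemma arnoldR_mono (θ : ℝ) : Monotone (arnoldR θ) := by
  intro x y h
  have hs := (abs_le.1 (arnoldR_sin_bound x y h)).1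
  unfold arnoldR
  have hπ := arnold_two_pi_pos
  have hd : (Real.sin (2*π*x) - Real.sin (2*π*y)) / (2*π) ≤ y - x := by
    rw [div_le_iff₀ hπ]; nlinarith
  rw [sub_div] at hd
  linarith

lemma arnoldR_lip (θ : ℝ) {x y : ℝ} (h : x ≤ y) :
    arnoldR θ y ≤ arnoldR θ x + 2*(y - x) := by
  have hs := (abs_le.1 (arnoldR_sin_bound x y h)).2
  unfold arnoldR
  have hπ := arnold_two_pi_pos
  have hd : (Real.sin (2*π*y) - Real.sin (2*π*x)) / (2*π) ≤ y - x := by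
    rw [div_le_iff₀ hπ]; nlinarith
  rw [sub_div] at hd
  linarith

lemma arnoldR_map_add_one (θ x : ℝ) : arnoldR θ (x + 1) = arnoldR θ x + 1 := by
  unfold arnoldR
  rw [mul_add, mul_one, Real.sin_add_two_pi]
  ring

/-- The Arnold map as a `CircleDeg1Lift`. -/
noncomputable def arnoldLift (θ : ℝ) : CircleDeg1Lift :=
  ⟨⟨arnoldR θ, arnoldR_mono θ⟩, arnoldR_map_add_one θ⟩

@[simp] lemma arnoldLift_coe (θ : ℝ) : ⇑(arnoldLift θ) = arnoldR θ := rfl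

lemma arnoldR_continuous (θ : ℝ) : Continuous (arnoldR θ) := by
  unfold arnoldR; fun_prop

lemma arnoldR_differentiable (θ : ℝ) : Differentiable ℝ (arnoldR θ) := by
  unfold arnoldR; fun_prop

lemma arnoldR_iter_differentiable (θ : ℝ) (n : ℕ) :
    Differentiable ℝ ((arnoldR θ)^[n]) := by
  induction n with
  | zero => simpa using differentiable_id
  | succ n ih =>
    rw [Function.iterate_succ]
    exact ih.comp (arnoldR_differentiable θ)

lemma arnoldR_iter_continuous (θ : ℝ) (n : ℕ) : Continuous ((arnoldR θ)^[n]) :=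
  (arnoldR_continuous θ).iterate n

lemma arnoldR_iter_add_int (θ : ℝ) (n : ℕ) (x : ℝ) (m : ℤ) :
    (arnoldR θ)^[n] (x + m) = (arnoldR θ)^[n] x + m := by
  have h := ((arnoldLift θ) ^ n).map_add_int x m
  rw [CircleDeg1Lift.coe_pow] at h
  exact h

lemma arnoldR_shift (θ θ' y : ℝ) : arnoldR θ' y = arnoldR θ y + (θ' - θ) := by
  unfold arnoldR; ring

lemma arnoldR_iter_mono_theta {θ θ' : ℝ} (h : θ ≤ θ') (n : ℕ) (x : ℝ) :
    (arnoldR θ)^[n] x ≤ (arnoldR θ')^[n] x := by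
  induction n with
  | zero => simp
  | succ n ih =>
    rw [Function.iterate_succ_apply', Function.iterate_succ_apply']
    calc arnoldR θ ((arnoldR θ)^[n] x) ≤ arnoldR θ' ((arnoldR θ)^[n] x) := by
          rw [arnoldR_shift θ θ']; linarith
      _ ≤ arnoldR θ' ((arnoldR θ')^[n] x) := arnoldR_mono θ' ih

lemma arnoldR_iter_lower {θ θ' : ℝ} (h : θ ≤ θ') {n : ℕ} (hn : 1 ≤ n) (x : ℝ) :
    (arnoldR θ)^[n] x + (θ' - θ) ≤ (arnoldR θ')^[n] x := by
  obtain ⟨m, rfl⟩ := Nat.exists_eq_add_of_le hn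
  rw [add_comm 1 m, Function.iterate_succ_apply', Function.iterate_succ_apply']
  calc arnoldR θ ((arnoldR θ)^[m] x) + (θ' - θ)
      = arnoldR θ' ((arnoldR θ)^[m] x) := (arnoldR_shift θ θ' _).symm
    _ ≤ arnoldR θ' ((arnoldR θ')^[m] x) := arnoldR_mono θ' (arnoldR_iter_mono_theta h m x)

lemma arnoldR_iter_upper {θ θ' : ℝ} (h : θ ≤ θ') (n : ℕ) (x : ℝ) :
    (arnoldR θ')^[n] x ≤ (arnoldR θ)^[n] x + 3^n * (θ' - θ) := by
  induction n with
  | zero => simp; nlinarith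
  | succ n ih =>
    rw [Function.iterate_succ_apply', Function.iterate_succ_apply']
    have h1 : (arnoldR θ)^[n] x ≤ (arnoldR θ')^[n] x := arnoldR_iter_mono_theta h n x
    have h2 : arnoldR θ ((arnoldR θ')^[n] x) ≤ arnoldR θ ((arnoldR θ)^[n] x)
        + 2 * ((arnoldR θ')^[n] x - (arnoldR θ)^[n] x) := arnoldR_lip θ h1
    have h3 : arnoldR θ' ((arnoldR θ')^[n] x)
        = arnoldR θ ((arnoldR θ')^[n] x) + (θ' - θ) := arnoldR_shift θ θ' _
    have h4 : (1:ℝ) ≤ 3^n := one_le_pow₀ (by norm_num : (1:ℝ) ≤ 3)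
    have h5 : (0:ℝ) ≤ (3^n - 1) * (θ' - θ) := by
      apply mul_nonneg <;> linarith
    have h6 : (3:ℝ)^(n+1) = 3 * 3^n := by ring
    nlinarith [ih]

lemma arnold_le_of_forall_pos_le_add {a b : ℝ} (h : ∀ ε : ℝ, 0 < ε → a ≤ b + ε) : a ≤ b := by
  by_contra hab
  push_neg at hab
  have := h ((a - b)/2) (by linarith)
  linarith

/-- At each endpoint of an Arnold tongue the periodic orbit is parabolic: if `θ*` is the
infimum or the supremum of the (nonempty) set `{θ : ρ(θ) = p/q}`, then there is `x ∈ ℝ`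
with `A_{θ*}^{∘q}(x) = x + p` and `(A_{θ*}^{∘q})'(x) = 1` (eigenvalue one). -/
theorem arnold_tongue_endpoints_parabolic (ρ : ℝ → ℝ)
    (hρ : ∀ θ x : ℝ,
      Filter.Tendsto (fun n : ℕ => (arnoldR θ)^[n] x / n) Filter.atTop (nhds (ρ θ)))
    (p : ℤ) (q : ℕ) (hq : 1 ≤ q)
    (hne : {θ : ℝ | ρ θ = (p : ℝ) / (q : ℝ)}.Nonempty)
    (θs : ℝ)
    (hθs : θs = sInf {θ : ℝ | ρ θ = (p : ℝ) / (q : ℝ)} ∨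
           θs = sSup {θ : ℝ | ρ θ = (p : ℝ) / (q : ℝ)}) :
    ∃ x : ℝ, (arnoldR θs)^[q] x = x + (p : ℝ) ∧ deriv ((arnoldR θs)^[q]) x = 1 := by
  set S := {θ : ℝ | ρ θ = (p : ℝ) / (q : ℝ)} with hS
  have hqpos : 0 < q := hq
  have htau : ∀ θ : ℝ, CircleDeg1Lift.translationNumber (arnoldLift θ) = ρ θ := by
    intro θ
    exact CircleDeg1Lift.translationNumber_eq_of_tendsto₀ _ (by simpa using hρ θ 0)
  have hchar : ∀ θ : ℝ, θ ∈ S ↔ ∃ x, (arnoldR θ)^[q] x = x + (p : ℝ) := by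
    intro θ
    rw [hS, Set.mem_setOf_eq, ← htau θ,
      CircleDeg1Lift.translationNumber_eq_rat_iff (arnoldLift θ)
        (arnoldR_continuous θ) hqpos]
    simp [CircleDeg1Lift.coe_pow]
  have hbd : ∀ θ ∈ S, (p:ℝ)/(q:ℝ) - 1 ≤ θ ∧ θ ≤ (p:ℝ)/(q:ℝ) + 1 := by
    intro θ hθ
    have h2π : (1:ℝ) ≤ 2*π := by nlinarith [pi_gt_three]
    have hsin : ∀ t : ℝ, |Real.sin t / (2*π)| ≤ 1 := by
      intro t
      rw [abs_div, abs_of_pos arnold_two_pi_pos, div_le_one arnold_two_pi_pos]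
      calc |Real.sin t| ≤ 1 := Real.abs_sin_le_one _
        _ ≤ 2*π := h2π
    have hub : CircleDeg1Lift.translationNumber (arnoldLift θ) ≤ θ + 1 := by
      apply CircleDeg1Lift.translationNumber_le_of_le_add
      intro x
      have := (abs_le.1 (hsin (2*π*x))).2
      show arnoldR θ x ≤ x + (θ + 1)
      unfold arnoldR; linarith
    have hlb : θ - 1 ≤ CircleDeg1Lift.translationNumber (arnoldLift θ) := by
      apply CircleDeg1Lift.le_translationNumber_of_add_le
      intro x
      have := (abs_le.1 (hsin (2*π*x))).1
      show x + (θ - 1) ≤ arnoldR θ x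
      unfold arnoldR; linarith
    rw [htau θ, hθ] at hub hlb
    constructor <;> linarith
  have hbdd_above : BddAbove S := ⟨(p:ℝ)/(q:ℝ) + 1, fun θ hθ => (hbd θ hθ).2⟩
  have hbdd_below : BddBelow S := ⟨(p:ℝ)/(q:ℝ) - 1, fun θ hθ => (hbd θ hθ).1⟩
  have h3q : (0:ℝ) < 3^q := by positivity
  obtain ⟨θ0, hθ0⟩ := hne
  have hnorm : ∀ θ : ℝ, (∃ x, (arnoldR θ)^[q] x = x + (p:ℝ)) →
      ∃ y ∈ Icc (0:ℝ) 1, (arnoldR θ)^[q] y = y + (p:ℝ) := by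
    intro θ ⟨x, hx⟩
    refine ⟨Int.fract x, ⟨Int.fract_nonneg x, le_of_lt (Int.fract_lt_one x)⟩, ?_⟩
    have hxe : x = Int.fract x + (⌊x⌋ : ℤ) := by rw [Int.fract]; ring
    rw [hxe, arnoldR_iter_add_int] at hx
    linarith
  rcases hθs with hcase | hcase
  · -- θs = sInf S
    have hub : ∀ θ ∈ S, θs ≤ θ := fun θ hθ => hcase ▸ csInf_le hbdd_below hθ
    have hθ0s : θs ≤ θ0 := hub θ0 hθ0
    obtain ⟨x2, _, hx2⟩ := hnorm θ0 ((hchar θ0).1 hθ0)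
    have hx2' : (arnoldR θs)^[q] x2 ≤ x2 + (p:ℝ) := by
      calc (arnoldR θs)^[q] x2 ≤ (arnoldR θ0)^[q] x2 := arnoldR_iter_mono_theta hθ0s q x2
        _ = x2 + (p:ℝ) := hx2
    have hnonpos : ∀ x : ℝ, (arnoldR θs)^[q] x ≤ x + (p:ℝ) := by
      intro x1
      by_contra hlt
      push_neg at hlt
      set ε := (arnoldR θs)^[q] x1 - (x1 + (p:ℝ)) with hε
      have hεpos : 0 < ε := by simp only [hε]; linarith
      set θ' := θs - ε/(2*3^q) with hθ'
      have hθ'lt : θ' < θs := by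
        rw [hθ']
        have : 0 < ε/(2*3^q) := by positivity
        linarith
      have h1 : x1 + (p:ℝ) < (arnoldR θ')^[q] x1 := by
        have hu := arnoldR_iter_upper (le_of_lt hθ'lt) q x1
        have he : (3:ℝ)^q * (θs - θ') = ε/2 := by
          rw [hθ']; field_simp; ring
        rw [he] at hu
        linarith
      have h2 : (arnoldR θ')^[q] x2 ≤ x2 + (p:ℝ) := by
        have := arnoldR_iter_lower (le_of_lt hθ'lt) hq x2
        linarith
      have hcont : ContinuousOn (fun x => (arnoldR θ')^[q] x - x) (uIcc x1 x2) :=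
        ((arnoldR_iter_continuous θ' q).sub continuous_id).continuousOn
      have hmem : (p:ℝ) ∈ uIcc ((arnoldR θ')^[q] x1 - x1) ((arnoldR θ')^[q] x2 - x2) := by
        rw [Set.mem_uIcc]
        right
        constructor <;> linarith
      obtain ⟨x3, _, hx3⟩ := intermediate_value_uIcc hcont hmem
      have hθ'S : θ' ∈ S := (hchar θ').2 ⟨x3, by dsimp at hx3; linarith⟩
      exact absurd (hub θ' hθ'S) (not_le.2 hθ'lt)
    obtain ⟨x0, hx0mem, hx0max⟩ := isCompact_Icc.exists_isMaxOn
      (Set.nonempty_Icc.2 zero_le_one)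
      ((arnoldR_iter_continuous θs q).sub continuous_id).continuousOn
    have hge : (p:ℝ) ≤ (arnoldR θs)^[q] x0 - x0 := by
      apply arnold_le_of_forall_pos_le_add
      intro ε hεpos
      have hδ : 0 < ε/3^q := by positivity
      obtain ⟨θn, hθnS, hθn⟩ := exists_lt_of_csInf_lt ⟨θ0, hθ0⟩
        (show sInf S < θs + ε/3^q by rw [← hcase]; linarith)
      have hθsn : θs ≤ θn := hub θn hθnS
      obtain ⟨y, hymem, hy⟩ := hnorm θn ((hchar θn).1 hθnS)
      have hu := arnoldR_iter_upper hθsn q y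
      rw [hy] at hu
      have hb : y + (p:ℝ) - 3^q*(θn - θs) ≤ (arnoldR θs)^[q] y := by linarith
      have hmax := hx0max hymem
      simp only [Set.mem_setOf_eq, id_eq, Pi.sub_apply] at hmax
      have h3 : 3^q*(θn - θs) ≤ ε := by
        rw [← le_div_iff₀' h3q]
        linarith
      linarith
    have hle : (arnoldR θs)^[q] x0 - x0 ≤ (p:ℝ) := by
      have := hnonpos x0; linarith
    have heq : (arnoldR θs)^[q] x0 = x0 + (p:ℝ) := by linarith
    refine ⟨x0, heq, ?_⟩
    have hglobal : IsMaxOn (fun x => (arnoldR θs)^[q] x - (x + (p:ℝ))) Set.univ x0 := by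
      intro x _
      simp only [Set.mem_setOf_eq]
      have := hnonpos x
      rw [heq]
      linarith
    have hloc : IsLocalMax (fun x => (arnoldR θs)^[q] x - (x + (p:ℝ))) x0 :=
      hglobal.isLocalMax Filter.univ_mem
    have hd0 := hloc.deriv_eq_zero
    have hdiff1 : DifferentiableAt ℝ ((arnoldR θs)^[q]) x0 := arnoldR_iter_differentiable θs q x0
    have hdiff2 : DifferentiableAt ℝ (fun x : ℝ => x + (p:ℝ)) x0 :=
      (differentiable_id.add_const _) x0
    have hds : deriv (fun x => (arnoldR θs)^[q] x - (x + (p:ℝ))) x0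
        = deriv ((arnoldR θs)^[q]) x0 - 1 := by
      rw [deriv_fun_sub hdiff1 hdiff2]
      simp
    rw [hds] at hd0
    linarith
  · -- θs = sSup S
    have hub : ∀ θ ∈ S, θ ≤ θs := fun θ hθ => hcase ▸ le_csSup hbdd_above hθ
    have hθ0s : θ0 ≤ θs := hub θ0 hθ0
    obtain ⟨x2, _, hx2⟩ := hnorm θ0 ((hchar θ0).1 hθ0)
    have hx2' : x2 + (p:ℝ) ≤ (arnoldR θs)^[q] x2 := by
      calc x2 + (p:ℝ) = (arnoldR θ0)^[q] x2 := hx2.symm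
        _ ≤ (arnoldR θs)^[q] x2 := arnoldR_iter_mono_theta hθ0s q x2
    have hnonneg : ∀ x : ℝ, x + (p:ℝ) ≤ (arnoldR θs)^[q] x := by
      intro x1
      by_contra hlt
      push_neg at hlt
      set ε := (x1 + (p:ℝ)) - (arnoldR θs)^[q] x1 with hε
      have hεpos : 0 < ε := by simp only [hε]; linarith
      set θ' := θs + ε/(2*3^q) with hθ'
      have hθ'lt : θs < θ' := by
        rw [hθ']
        have : 0 < ε/(2*3^q) := by positivity
        linarith
      have h1 : (arnoldR θ')^[q] x1 < x1 + (p:ℝ) := by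
        have hu := arnoldR_iter_upper (le_of_lt hθ'lt) q x1
        have he : (3:ℝ)^q * (θ' - θs) = ε/2 := by
          rw [hθ']; field_simp; ring
        rw [he] at hu
        linarith
      have h2 : x2 + (p:ℝ) ≤ (arnoldR θ')^[q] x2 := by
        have := arnoldR_iter_lower (le_of_lt hθ'lt) hq x2
        linarith
      have hcont : ContinuousOn (fun x => (arnoldR θ')^[q] x - x) (uIcc x1 x2) :=
        ((arnoldR_iter_continuous θ' q).sub continuous_id).continuousOn
      have hmem : (p:ℝ) ∈ uIcc ((arnoldR θ')^[q] x1 - x1) ((arnoldR θ')^[q] x2 - x2) := by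
        rw [Set.mem_uIcc]
        left
        constructor <;> linarith
      obtain ⟨x3, _, hx3⟩ := intermediate_value_uIcc hcont hmem
      have hθ'S : θ' ∈ S := (hchar θ').2 ⟨x3, by dsimp at hx3; linarith⟩
      exact absurd (hub θ' hθ'S) (not_le.2 hθ'lt)
    obtain ⟨x0, hx0mem, hx0min⟩ := isCompact_Icc.exists_isMinOn
      (Set.nonempty_Icc.2 zero_le_one)
      ((arnoldR_iter_continuous θs q).sub continuous_id).continuousOn
    have hle : (arnoldR θs)^[q] x0 - x0 ≤ (p:ℝ) := by
      apply arnold_le_of_forall_pos_le_add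
      intro ε hεpos
      have hδ : 0 < ε/3^q := by positivity
      obtain ⟨θn, hθnS, hθn⟩ := exists_lt_of_lt_csSup ⟨θ0, hθ0⟩
        (show θs - ε/3^q < sSup S by rw [← hcase]; linarith)
      have hθsn : θn ≤ θs := hub θn hθnS
      obtain ⟨y, hymem, hy⟩ := hnorm θn ((hchar θn).1 hθnS)
      have hu := arnoldR_iter_upper hθsn q y
      rw [hy] at hu
      have hmin := hx0min hymem
      simp only [Set.mem_setOf_eq, id_eq, Pi.sub_apply] at hmin
      have h3 : 3^q*(θs - θn) ≤ ε := by
        rw [← le_div_iff₀' h3q]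
        linarith
      linarith
    have hge : (p:ℝ) ≤ (arnoldR θs)^[q] x0 - x0 := by
      have := hnonneg x0; linarith
    have heq : (arnoldR θs)^[q] x0 = x0 + (p:ℝ) := by linarith
    refine ⟨x0, heq, ?_⟩
    have hglobal : IsMinOn (fun x => (arnoldR θs)^[q] x - (x + (p:ℝ))) Set.univ x0 := by
      intro x _
      simp only [Set.mem_setOf_eq]
      have := hnonneg x
      rw [heq]
      linarith
    have hloc : IsLocalMin (fun x => (arnoldR θs)^[q] x - (x + (p:ℝ))) x0 :=
      hglobal.isLocalMin Filter.univ_mem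
    have hd0 := hloc.deriv_eq_zero
    have hdiff1 : DifferentiableAt ℝ ((arnoldR θs)^[q]) x0 := arnoldR_iter_differentiable θs q x0
    have hdiff2 : DifferentiableAt ℝ (fun x : ℝ => x + (p:ℝ)) x0 :=
      (differentiable_id.add_const _) x0
    have hds : deriv (fun x => (arnoldR θs)^[q] x - (x + (p:ℝ))) x0
        = deriv ((arnoldR θs)^[q]) x0 - 1 := by
      rw [deriv_fun_sub hdiff1 hdiff2]
      simp
    rw [hds] at hd0
    linarith
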